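/- In the balanced string Δ(S) = "("^n · δ(S[1])···δ(S[n]) with δ(0) = ")", δ(1) = "())": each δ(S[i]) contains exactly one closed parenthesis that is unmatched within the suffix δ(S[1])···δ(S[n]); the i-th leading open parenthesis from the right (position n − i + 1) is matched with the last character of δ(S[i]). -/
import Mathlib


/-- A parenthesis is `true` iff it is an open parenthesis '('. -/
def BalancedParen (T : List Bool) : Prop :=
  (∀ p, (T.take p).count false ≤ (T.take p).count true) ∧ T.count true = T.count false

/-- δ(0) = ")", δ(1) = "())". -/
def δc (b : Bool) : List Bool := if b then [true, false, false] else [false]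

/-- Δ(S) = "("^n · δ(S[1])···δ(S[n]). -/
def ΔFc (S : List Bool) : List Bool :=
  List.replicate S.length true ++ S.flatMap δc

/-- The smallest position `q > p` such that the (1-based) segment `T[p..q]` is balanced:
the closed parenthesis matching the open parenthesis at position `p`. -/
noncomputable def findclose (T : List Bool) (p : ℕ) : ℕ :=
  sInf {q : ℕ | p < q ∧ BalancedParen ((T.drop (p - 1)).take (q - p + 1))}

lemma delta_count (b : Bool) : (δc b).count false = (δc b).count true + 1 := by
  cases b <;> simp [δc]

lemma delta_prefix_count (b : Bool) (m : ℕ) :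
    ((δc b).take m).count false ≤ ((δc b).take m).count true + 1 := by
  cases b <;> rcases m with _|_|_|m <;> simp [δc]

lemma delta_proper_prefix_count (b : Bool) (m : ℕ) (h : m < (δc b).length) :
    ((δc b).take m).count false ≤ ((δc b).take m).count true := by
  cases b <;> rcases m with _|_|_|m <;> simp_all [δc] <;> omega

lemma flatMap_count (S : List Bool) :
    (S.flatMap δc).count false = (S.flatMap δc).count true + S.length := by
  induction S with
  | nil => simp
  | cons b S ih =>
    rw [List.flatMap_cons, List.count_append, List.count_append]
    have := delta_count b
    simp only [List.length_cons]
    omega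

lemma flatMap_length (S : List Bool) : S.length ≤ (S.flatMap δc).length := by
  induction S with
  | nil => simp
  | cons b S ih =>
    rw [List.flatMap_cons, List.length_append]
    have : 1 ≤ (δc b).length := by cases b <;> simp [δc]
    simp only [List.length_cons]
    omega

lemma flatMap_prefix_count (S : List Bool) (m : ℕ) :
    ((S.flatMap δc).take m).count false ≤ ((S.flatMap δc).take m).count true + S.length := by
  induction S generalizing m with
  | nil => simp
  | cons b S ih =>
    rw [List.flatMap_cons, List.take_append, List.count_append,
      List.count_append]
    have h1 := delta_prefix_count b m
    have h2 := ih (m - (δc b).length)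
    simp only [List.length_cons]
    omega

lemma flatMap_prefix_count_lt (S : List Bool) (m : ℕ) (hm : m < (S.flatMap δc).length) :
    ((S.flatMap δc).take m).count false < ((S.flatMap δc).take m).count true + S.length := by
  induction S generalizing m with
  | nil => simp at hm
  | cons b S ih =>
    rw [List.flatMap_cons] at hm ⊢
    rw [List.take_append, List.count_append, List.count_append]
    by_cases h : m < (δc b).length
    · have h1 := delta_proper_prefix_count b m h
      have h0 : m - (δc b).length = 0 := by omega
      rw [h0]
      simp only [List.take_zero, List.count_nil, List.length_cons]
      omega
    · push_neg at h
      have htake : (δc b).take m = δc b := List.take_of_length_le h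
      rw [htake]
      have h1 := delta_count b
      have h2 : m - (δc b).length < (S.flatMap δc).length := by
        rw [List.length_append] at hm; omega
      have h3 := ih _ h2
      simp only [List.length_cons]
      omega

lemma count_rep_true (n : ℕ) : (List.replicate n true).count true = n := by simp
lemma count_rep_false (n : ℕ) : (List.replicate n true).count false = 0 := by simp [List.count_replicate]

lemma balanced_ΔFc (S : List Bool) : BalancedParen (ΔFc S) := by
  constructor
  · intro p
    rw [ΔFc, List.take_append, List.count_append, List.count_append,
      List.take_replicate, List.length_replicate, count_rep_true, count_rep_false]
    have h1 := flatMap_prefix_count S (p - S.length)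
    by_cases hp : p ≤ S.length
    · have h0 : p - S.length = 0 := by omega
      rw [h0]
      simp
    · have hmin : min p S.length = S.length := by omega
      rw [hmin]
      omega
  · rw [ΔFc, List.count_append, List.count_append, count_rep_true, count_rep_false]
    have := flatMap_count S
    omega

/-- Each δ(S[i]) contains exactly one closed parenthesis unmatched within the suffix
δ(S[1])···δ(S[n]) (it has one more ')' than '('); and the i-th leading open parenthesis
from the right (position n − i + 1) is matched with the last character of δ(S[i]),
whose position in Δ(S) is n + |δ(S[1])···δ(S[i])|. -/
theorem stmt17 (S : List Bool) :
    (∀ b : Bool, (δc b).count false = (δc b).count true + 1) ∧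
    (∀ i : ℕ, 1 ≤ i → i ≤ S.length →
      findclose (ΔFc S) (S.length - i + 1) =
        S.length + ((S.take i).flatMap δc).length) := by
  refine ⟨delta_count, fun i hi1 hi2 => ?_⟩
  set n := S.length with hn
  set L := ((S.take i).flatMap δc).length with hL
  have hlen_take : (S.take i).length = i := by
    rw [List.length_take]; omega
  have hLi : i ≤ L := by
    have := flatMap_length (S.take i)
    omega
  have hsplit : S.flatMap δc = (S.take i).flatMap δc ++ (S.drop i).flatMap δc := by
    rw [← List.flatMap_append, List.take_append_drop]
  -- the dropped part of ΔFc S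
  have hdrop : (ΔFc S).drop (n - i + 1 - 1) = List.replicate i true ++ S.flatMap δc := by
    rw [ΔFc, List.drop_append, List.drop_replicate, List.length_replicate]
    have e1 : n - (n - i + 1 - 1) = i := by omega
    have e2 : n - i + 1 - 1 - n = 0 := by omega
    rw [e1, e2, List.drop_zero]
  have hmem : n + L ∈ {q : ℕ | n - i + 1 < q ∧
      BalancedParen (((ΔFc S).drop (n - i + 1 - 1)).take (q - (n - i + 1) + 1))} := by
    constructor
    · omega
    · have e3 : n + L - (n - i + 1) + 1 = i + L := by omega
      rw [hdrop, e3, List.take_append, List.length_replicate,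
        List.take_replicate]
      have e4 : min (i + L) i = i := by omega
      have e5 : i + L - i = L := by omega
      rw [e4, e5, hsplit, List.take_left]
      have := balanced_ΔFc (S.take i)
      rwa [ΔFc, hlen_take] at this
  have hlb : ∀ q ∈ {q : ℕ | n - i + 1 < q ∧
      BalancedParen (((ΔFc S).drop (n - i + 1 - 1)).take (q - (n - i + 1) + 1))},
      n + L ≤ q := by
    rintro q ⟨hq1, hq2⟩
    by_contra hcon
    push_neg at hcon
    set m := q - (n - i + 1) + 1 with hm
    have hm2 : 2 ≤ m := by omega
    have hmlt : m < i + L := by omega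
    rw [hdrop, List.take_append, List.take_replicate,
      List.length_replicate] at hq2
    have hbal := hq2.2
    rw [List.count_append, List.count_append, count_rep_true, count_rep_false] at hbal
    by_cases hmi : m ≤ i
    · have e6 : m - i = 0 := by omega
      have e7 : min m i = m := by omega
      rw [e6, e7] at hbal
      simp at hbal
    · push_neg at hmi
      have e7 : min m i = i := by omega
      rw [e7] at hbal
      have e8 : (S.flatMap δc).take (m - i) = ((S.take i).flatMap δc).take (m - i) := by
        rw [hsplit, List.take_append_of_le_length (by omega : m - i ≤ L)]
      rw [e8] at hbal
      have hstrict := flatMap_prefix_count_lt (S.take i) (m - i) (by omega)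
      rw [hlen_take] at hstrict
      omega
  rw [findclose]
  exact le_antisymm (Nat.sInf_le hmem) (le_csInf ⟨_, hmem⟩ hlb)
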